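/- Let k be a field of characteristic ≠ 2 and H the Heisenberg Lie k-algebra with basis x,y,z, z = [y,x] central. Every k-involution of H fixing z (τ(z)=z) is equivalent, via an automorphism of H, to the involution η with η(x) = x, η(y) = −y, η(z) = z. -/

import Mathlib

set_option maxHeartbeats 1000000


/-- Let `k` be a field of characteristic `≠ 2` and `H` the Heisenberg
Lie `k`-algebra with basis `x, y, z`, `z = ⁅y, x⁆` central.  Every `k`-involution `τ` of
`H` fixing `z` (`τ z = z`) is equivalent, via a Lie algebra automorphism `φ` of `H`
(so `φ⁻¹ ∘ τ ∘ φ = η`), to the involution `η` with `η x = x`, `η y = -y`, `η z = z`. -/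
theorem involution_heisenberg_fixing_center_equivalent_to_standard
    (k : Type) [Field k] (hchar : (2 : k) ≠ 0)
    (H : Type) [LieRing H] [LieAlgebra k H]
    (e : Module.Basis (Fin 3) k H)
    (x y z : H) (hx : e 0 = x) (hy : e 1 = y) (hzb : e 2 = z)
    (hz : ⁅y, x⁆ = z) (hxz : ⁅x, z⁆ = 0) (hyz : ⁅y, z⁆ = 0)
    (τ : H →ₗ[k] H)
    (hτ2 : ∀ a : H, τ (τ a) = a)
    (hτanti : ∀ a b : H, τ ⁅a, b⁆ = ⁅τ b, τ a⁆)
    (hτz : τ z = z) :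
    ∃ φ : H ≃ₗ[k] H,
      (∀ a b : H, φ ⁅a, b⁆ = ⁅φ a, φ b⁆) ∧
      -- `φ⁻¹ ∘ τ ∘ φ` is the involution `x ↦ x`, `y ↦ -y`, `z ↦ z`
      φ.symm (τ (φ x)) = x ∧ φ.symm (τ (φ y)) = -y ∧ φ.symm (τ (φ z)) = z := by
  classical
  -- basis coordinate facts
  have hx0 : e.repr x 0 = 1 := by rw [← hx]; simp
  have hx1 : e.repr x 1 = 0 := by rw [← hx]; simp
  have hx2 : e.repr x 2 = 0 := by rw [← hx]; simp
  have hy0 : e.repr y 0 = 0 := by rw [← hy]; simp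
  have hy1 : e.repr y 1 = 1 := by rw [← hy]; simp
  have hy2 : e.repr y 2 = 0 := by rw [← hy]; simp
  have hz0 : e.repr z 0 = 0 := by rw [← hzb]; simp
  have hz1 : e.repr z 1 = 0 := by rw [← hzb]; simp
  have hz2 : e.repr z 2 = 1 := by rw [← hzb]; simp
  have hsum : ∀ m : H, m = e.repr m 0 • x + e.repr m 1 • y + e.repr m 2 • z := by
    intro m
    have h := e.sum_repr m
    rw [Fin.sum_univ_three, hx, hy, hzb] at h
    exact h.symm
  -- bracket relations
  have hxy : ⁅x, y⁆ = -z := by rw [← lie_skew, hz]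
  have hzx : ⁅z, x⁆ = 0 := by rw [← lie_skew, hxz, neg_zero]
  have hzy : ⁅z, y⁆ = 0 := by rw [← lie_skew, hyz, neg_zero]
  -- the general bracket formula
  have hbr : ∀ a b : H, ⁅a, b⁆ = (e.repr a 1 * e.repr b 0 - e.repr a 0 * e.repr b 1) • z := by
    intro a b
    conv_lhs => rw [hsum a, hsum b]
    simp only [add_lie, lie_add, smul_lie, lie_smul, lie_self, hz, hxy, hxz, hyz, hzx, hzy,
      smul_neg, smul_zero, add_zero, zero_add, smul_smul]
    module
  -- coordinates of τ x and τ y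
  obtain ⟨A, B, C, hτx⟩ : ∃ A B C : k, τ x = A • x + B • y + C • z := ⟨_, _, _, hsum (τ x)⟩
  obtain ⟨D, E2, F, hτy⟩ : ∃ D E2 F : k, τ y = D • x + E2 • y + F • z := ⟨_, _, _, hsum (τ y)⟩
  -- equation from the anti-automorphism property
  have q5 : B * D - A * E2 = 1 := by
    have h := hτanti y x
    rw [hz, hτz, hτx, hτy, hbr] at h
    have h2 := congrArg (fun m => e.repr m 2) h
    simp only [map_add, map_smul, Finsupp.add_apply, Finsupp.smul_apply, smul_eq_mul,
      hx0, hx1, hx2, hy0, hy1, hy2, hz0, hz1, hz2, mul_zero, mul_one, add_zero, zero_add] at h2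
    linear_combination -h2
  -- equations from τ² = id
  have h2x : A • τ x + B • τ y + C • z = x := by
    have h := hτ2 x
    rw [hτx, map_add, map_add, map_smul, map_smul, map_smul, hτz] at h
    exact h
  have h2y : D • τ x + E2 • τ y + F • z = y := by
    have h := hτ2 y
    rw [hτy, map_add, map_add, map_smul, map_smul, map_smul, hτz] at h
    exact h
  rw [hτx, hτy] at h2x h2y
  have q1 : A * A + B * D = 1 := by
    have h := congrArg (fun m => e.repr m 0) h2x
    simp only [map_add, map_smul, Finsupp.add_apply, Finsupp.smul_apply, smul_eq_mul,
      hx0, hx1, hx2, hy0, hy1, hy2, hz0, hz1, hz2, mul_zero, mul_one, add_zero, zero_add] at h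
    linear_combination h
  have q2 : A * B + B * E2 = 0 := by
    have h := congrArg (fun m => e.repr m 1) h2x
    simp only [map_add, map_smul, Finsupp.add_apply, Finsupp.smul_apply, smul_eq_mul,
      hx0, hx1, hx2, hy0, hy1, hy2, hz0, hz1, hz2, mul_zero, mul_one, add_zero, zero_add] at h
    linear_combination h
  have q3 : D * A + E2 * D = 0 := by
    have h := congrArg (fun m => e.repr m 0) h2y
    simp only [map_add, map_smul, Finsupp.add_apply, Finsupp.smul_apply, smul_eq_mul,
      hx0, hx1, hx2, hy0, hy1, hy2, hz0, hz1, hz2, mul_zero, mul_one, add_zero, zero_add] at h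
    linear_combination h
  have q4 : D * B + E2 * E2 = 1 := by
    have h := congrArg (fun m => e.repr m 1) h2y
    simp only [map_add, map_smul, Finsupp.add_apply, Finsupp.smul_apply, smul_eq_mul,
      hx0, hx1, hx2, hy0, hy1, hy2, hz0, hz1, hz2, mul_zero, mul_one, add_zero, zero_add] at h
    linear_combination h
  -- trace of the induced 2×2 involution is zero
  have hE : E2 = -A := by
    have hsq : (A + E2) * (A + E2) = 0 := by linear_combination q1 + q4 - 2 * q5
    have h0 : A + E2 = 0 := by
      rcases mul_eq_zero.mp hsq with h | h <;> exact h
    linear_combination h0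
  -- choose eigenvectors (P,Q) for +1 and (S,T) for -1 of the induced involution
  obtain ⟨P, Q, S, T, hv0, hv1, hw0, hw1, hΔ⟩ :
      ∃ P Q S T : k, (P * A + Q * D = P) ∧ (P * B + Q * E2 = Q) ∧
        (S * A + T * D = -S) ∧ (S * B + T * E2 = -T) ∧ (P * T - S * Q ≠ 0) := by
    by_cases hA1 : A = -1
    · have hbd : B * D = 0 := by linear_combination q1 - (A - 1) * hA1
      refine ⟨D, 2, A - 1, B, ?_, ?_, ?_, ?_, ?_⟩
      · linear_combination D * hA1
      · linear_combination hbd + 2 * hE - 2 * hA1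
      · linear_combination q1
      · linear_combination B * hE
      · intro h
        have h4 : (2 : k) * 2 = 0 := by linear_combination h - hbd + 2 * hA1
        rcases mul_eq_zero.mp h4 with h' | h' <;> exact hchar h'
    · by_cases hA2 : A = 1
      · have hbd : B * D = 0 := by linear_combination q1 - (A + 1) * hA2
        refine ⟨A + 1, B, D, -2, ?_, ?_, ?_, ?_, ?_⟩
        · linear_combination q1
        · linear_combination B * hE
        · linear_combination D * hA2
        · linear_combination hbd - 2 * hE + 2 * hA2
        · intro h
          have h4 : (2 : k) * 2 = 0 := by linear_combination -h - hbd - 2 * hA2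
          rcases mul_eq_zero.mp h4 with h' | h' <;> exact hchar h'
      · have hB : B ≠ 0 := by
          intro h0
          have hfac : (A - 1) * (A + 1) = 0 := by linear_combination q1 - D * h0
          rcases mul_eq_zero.mp hfac with h | h
          · exact hA2 (by linear_combination h)
          · exact hA1 (by linear_combination h)
        refine ⟨A + 1, B, A - 1, B, ?_, ?_, ?_, ?_, ?_⟩
        · linear_combination q1
        · linear_combination B * hE
        · linear_combination q1
        · linear_combination B * hE
        · intro h
          have h2B : (2 : k) * B = 0 := by linear_combination h
          rcases mul_eq_zero.mp h2B with h' | h'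
          · exact hchar h'
          · exact hB h'
  set Δ : k := P * T - S * Q with hΔdef
  -- symmetrized eigenvectors of τ in H
  set V : H := P • x + Q • y with hV
  set W : H := S • x + T • y with hW
  set v' : H := (2 : k)⁻¹ • (V + τ V) with hv'
  set w' : H := (2 : k)⁻¹ • (W - τ W) with hw'
  have hτv' : τ v' = v' := by
    rw [hv', map_smul, map_add, hτ2, add_comm]
  have hτw' : τ w' = -w' := by
    rw [hw', map_smul, map_sub, hτ2, ← smul_neg, neg_sub]
  -- explicit coordinates of v' and w'
  have hτV : τ V = P • x + Q • y + (P * C + Q * F) • z := by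
    rw [hV, map_add, map_smul, map_smul, hτx, hτy]
    have : (P * A + Q * D) • x + (P * B + Q * E2) • y + (P * C + Q * F) • z
        = P • x + Q • y + (P * C + Q * F) • z := by rw [hv0, hv1]
    rw [← this]; module
  have hτW : τ W = -(S • x) - T • y + (S * C + T * F) • z := by
    rw [hW, map_add, map_smul, map_smul, hτx, hτy]
    have : (S * A + T * D) • x + (S * B + T * E2) • y + (S * C + T * F) • z
        = -(S • x) - T • y + (S * C + T * F) • z := by
      rw [hw0, hw1]; module
    rw [← this]; module
  have hv'eq : v' = P • x + Q • y + ((2 : k)⁻¹ * (P * C + Q * F)) • z := by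
    rw [hv', hτV, hV]
    match_scalars <;> field_simp <;> ring
  have hw'eq : w' = S • x + T • y + (-((2 : k)⁻¹ * (S * C + T * F))) • z := by
    rw [hw', hτW, hW]
    match_scalars <;> field_simp <;> ring
  -- the linear map φ₀ sending x ↦ v', y ↦ w', z ↦ Δ • z
  set φ₀ : H →ₗ[k] H := e.constr k ![v', w', Δ • z] with hφ₀
  have hφ₀x : φ₀ x = v' := by rw [← hx, hφ₀, e.constr_basis]; simp
  have hφ₀y : φ₀ y = w' := by rw [← hy, hφ₀, e.constr_basis]; simp
  have hφ₀z : φ₀ z = Δ • z := by rw [← hzb, hφ₀, e.constr_basis]; simp [hzb]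
  -- its matrix and determinant
  have hMeq : LinearMap.toMatrix e e φ₀ =
      !![P, S, 0; Q, T, 0; (2 : k)⁻¹ * (P * C + Q * F), -((2 : k)⁻¹ * (S * C + T * F)), Δ] := by
    ext i j
    fin_cases j <;> fin_cases i <;>
      simp [LinearMap.toMatrix_apply, hx, hy, hzb, hφ₀x, hφ₀y, hφ₀z, hv'eq, hw'eq,
        hx0, hx1, hx2, hy0, hy1, hy2, hz0, hz1, hz2]
  have hdet : IsUnit (LinearMap.toMatrix e e φ₀).det := by
    rw [hMeq]
    have : (!![P, S, 0; Q, T, 0; (2 : k)⁻¹ * (P * C + Q * F),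
        -((2 : k)⁻¹ * (S * C + T * F)), Δ]).det = Δ * Δ := by
      rw [Matrix.det_fin_three]
      simp [Matrix.cons_val_zero, Matrix.cons_val_one]
      ring
    rw [this]
    exact (mul_ne_zero hΔ hΔ).isUnit
  refine ⟨LinearEquiv.ofIsUnitDet hdet, ?_, ?_, ?_, ?_⟩
  · -- φ preserves brackets
    intro m n
    have hφm : ∀ m : H, φ₀ m = e.repr m 0 • v' + e.repr m 1 • w' + e.repr m 2 • (Δ • z) := by
      intro m
      conv_lhs => rw [hsum m]
      rw [map_add, map_add, map_smul, map_smul, map_smul, hφ₀x, hφ₀y, hφ₀z]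
    have hc0 : ∀ m : H, e.repr (φ₀ m) 0 = e.repr m 0 * P + e.repr m 1 * S := by
      intro m
      rw [hφm m, hv'eq, hw'eq]
      simp [hx0, hx1, hx2, hy0, hy1, hy2, hz0, hz1, hz2]
    have hc1 : ∀ m : H, e.repr (φ₀ m) 1 = e.repr m 0 * Q + e.repr m 1 * T := by
      intro m
      rw [hφm m, hv'eq, hw'eq]
      simp [hx0, hx1, hx2, hy0, hy1, hy2, hz0, hz1, hz2]
    have key : φ₀ ⁅m, n⁆ = ⁅φ₀ m, φ₀ n⁆ := by
      rw [hbr m n, map_smul, hφ₀z, hbr (φ₀ m) (φ₀ n), hc0 m, hc0 n, hc1 m, hc1 n, smul_smul]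
      congr 1
      rw [hΔdef]; ring
    simpa [LinearEquiv.ofIsUnitDet_apply] using key
  · -- x-component
    have h1 : (LinearEquiv.ofIsUnitDet hdet) x = v' := by
      rw [LinearEquiv.ofIsUnitDet_apply, hφ₀x]
    rw [h1, hτv', ← h1, LinearEquiv.symm_apply_apply]
  · -- y-component
    have h1 : (LinearEquiv.ofIsUnitDet hdet) y = w' := by
      rw [LinearEquiv.ofIsUnitDet_apply, hφ₀y]
    have h2 : (LinearEquiv.ofIsUnitDet hdet) (-y) = -w' := by rw [map_neg, h1]
    rw [h1, hτw', ← h2, LinearEquiv.symm_apply_apply]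
  · -- z-component
    have h1 : (LinearEquiv.ofIsUnitDet hdet) z = Δ • z := by
      rw [LinearEquiv.ofIsUnitDet_apply, hφ₀z]
    rw [h1, map_smul, hτz, ← h1, LinearEquiv.symm_apply_apply]
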